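/- Let S ∈ ℝ^{n×n}, b ∈ ℝ^{n×1}, c ∈ ℝ^{1×n} be nonnegative and N a positive integer. Form the (n+3)×(n+3) matrix G with top-left block S, the vector b as the last column of the S-block rows (followed by zeros), the row (c, N, N, N), and two final rows (0,…,0,N,N,0) and (0,…,0,N,0,N). If PSD rank(G) ≤ r + 2, then there exists x ≥ 0 such that the (n+1)×(n+1) matrix A(x) = [[S, b],[c, x]] has PSD rank at most r. -/

import Mathlib

open Matrix

noncomputable def PsdRank {α β : Type} [Fintype α] [Fintype β] (A : Matrix α β ℝ) : ℕ :=
  sInf {k : ℕ | ∃ (B : α → Matrix (Fin k) (Fin k) ℝ) (C : β → Matrix (Fin k) (Fin k) ℝ),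
    (∀ i, (B i).PosSemidef) ∧ (∀ j, (C j).PosSemidef) ∧ ∀ i j, A i j = ((B i) * (C j)).trace}

namespace PsdGadget

/-! ### Generic auxiliary lemmas -/

lemma trace_conjT_nonneg {ι κ : Type} [Fintype ι] [Fintype κ] (M : Matrix ι κ ℝ) :
    0 ≤ (Mᴴ * M).trace := by
  rw [Matrix.trace]
  refine Finset.sum_nonneg fun j _ => ?_
  simp only [Matrix.diag_apply, Matrix.mul_apply, conjTranspose_apply, star_trivial]
  exact Finset.sum_nonneg fun i _ => mul_self_nonneg _

lemma eq_zero_of_trace_conjT {ι κ : Type} [Fintype ι] [Fintype κ] (M : Matrix ι κ ℝ)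
    (h : (Mᴴ * M).trace = 0) : M = 0 := by
  have h' : ∀ j ∈ Finset.univ, (0:ℝ) ≤ (Mᴴ * M).diag j := fun j _ => by
    simp only [Matrix.diag_apply, Matrix.mul_apply, conjTranspose_apply, star_trivial]
    exact Finset.sum_nonneg fun i _ => mul_self_nonneg _
  rw [Matrix.trace, Finset.sum_eq_zero_iff_of_nonneg h'] at h
  ext i j
  have hj := h j (Finset.mem_univ j)
  simp only [Matrix.diag_apply, Matrix.mul_apply, conjTranspose_apply, star_trivial] at hj
  have := (Finset.sum_eq_zero_iff_of_nonneg (fun i _ => mul_self_nonneg (M i j))).mp hj i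
    (Finset.mem_univ i)
  simpa [mul_self_eq_zero] using this

lemma trace_psd_rearrange {k : ℕ} (R Q : Matrix (Fin k) (Fin k) ℝ) :
    (Rᴴ * R * (Qᴴ * Q)).trace = ((R * Qᴴ)ᴴ * (R * Qᴴ)).trace := by
  rw [conjTranspose_mul, conjTranspose_conjTranspose]
  rw [show Rᴴ * R * (Qᴴ * Q) = (Rᴴ * (R * Qᴴ)) * Q by simp only [Matrix.mul_assoc],
    Matrix.trace_mul_comm,
    show Q * (Rᴴ * (R * Qᴴ)) = (Q * Rᴴ) * (R * Qᴴ) by simp only [Matrix.mul_assoc]]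

lemma psd_trace_mul_nonneg {k : ℕ} {B C : Matrix (Fin k) (Fin k) ℝ}
    (hB : B.PosSemidef) (hC : C.PosSemidef) : 0 ≤ (B * C).trace := by
  obtain ⟨R, rfl⟩ := (by open scoped MatrixOrder in obtain ⟨R', hR'⟩ := CStarAlgebra.nonneg_iff_eq_star_mul_self.mp hB.nonneg; exact ⟨R', hR'⟩ : ∃ R' : Matrix (Fin k) (Fin k) ℝ, B = R'ᴴ * R')
  obtain ⟨Q, rfl⟩ := (by open scoped MatrixOrder in obtain ⟨R', hR'⟩ := CStarAlgebra.nonneg_iff_eq_star_mul_self.mp hC.nonneg; exact ⟨R', hR'⟩ : ∃ R' : Matrix (Fin k) (Fin k) ℝ, C = R'ᴴ * R')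
  rw [trace_psd_rearrange]
  exact trace_conjT_nonneg _

lemma psd_mul_eq_zero_of_trace {k : ℕ} {B C : Matrix (Fin k) (Fin k) ℝ}
    (hB : B.PosSemidef) (hC : C.PosSemidef) (h : (B * C).trace = 0) : B * C = 0 := by
  obtain ⟨R, rfl⟩ := (by open scoped MatrixOrder in obtain ⟨R', hR'⟩ := CStarAlgebra.nonneg_iff_eq_star_mul_self.mp hB.nonneg; exact ⟨R', hR'⟩ : ∃ R' : Matrix (Fin k) (Fin k) ℝ, B = R'ᴴ * R')
  obtain ⟨Q, rfl⟩ := (by open scoped MatrixOrder in obtain ⟨R', hR'⟩ := CStarAlgebra.nonneg_iff_eq_star_mul_self.mp hC.nonneg; exact ⟨R', hR'⟩ : ∃ R' : Matrix (Fin k) (Fin k) ℝ, C = R'ᴴ * R')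
  rw [trace_psd_rearrange] at h
  have h0 : R * Qᴴ = 0 := eq_zero_of_trace_conjT _ h
  calc Rᴴ * R * (Qᴴ * Q) = Rᴴ * (R * Qᴴ) * Q := by simp only [Matrix.mul_assoc]
    _ = 0 := by rw [h0, Matrix.mul_zero, Matrix.zero_mul]

lemma psd_conj {k r : ℕ} {A : Matrix (Fin k) (Fin k) ℝ} (hA : A.PosSemidef)
    (Z : Matrix (Fin k) (Fin r) ℝ) : (Zᵀ * A * Z).PosSemidef := by
  have := hA.conjTranspose_mul_mul_same Z
  rwa [conjTranspose_eq_transpose_of_trivial] at this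

lemma psd_symm {k : ℕ} {A : Matrix (Fin k) (Fin k) ℝ} (hA : A.PosSemidef) : Aᵀ = A := by
  have := hA.1
  rwa [Matrix.IsHermitian, conjTranspose_eq_transpose_of_trivial] at this

lemma symm_dot {k : ℕ} {M : Matrix (Fin k) (Fin k) ℝ} (hM : Mᵀ = M) (a bb : Fin k → ℝ) :
    (M *ᵥ a) ⬝ᵥ bb = a ⬝ᵥ (M *ᵥ bb) := by
  rw [dotProduct_mulVec]
  conv_rhs => rw [← hM, vecMul_transpose]

lemma mul_vecMulVec {ι κ ι' : Type} [Fintype κ] (M : Matrix ι κ ℝ) (a : κ → ℝ) (bb : ι' → ℝ) :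
    M * vecMulVec a bb = vecMulVec (M *ᵥ a) bb := by
  ext i j
  simp only [Matrix.mul_apply, vecMulVec_apply, Matrix.mulVec, dotProduct,
    Finset.sum_mul]
  exact Finset.sum_congr rfl fun t _ => by ring

lemma vecMulVec_mulVec {ι κ : Type} [Fintype κ] (a : ι → ℝ) (bb : κ → ℝ) (x : κ → ℝ) :
    (vecMulVec a bb) *ᵥ x = (bb ⬝ᵥ x) • a := by
  ext i
  simp only [Matrix.mulVec, vecMulVec_apply, dotProduct, Pi.smul_apply, smul_eq_mul,
    Finset.sum_mul]
  exact Finset.sum_congr rfl fun t _ => by ring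

lemma zero_vecMulVec {ι ι' : Type} (bb : ι' → ℝ) :
    vecMulVec (0 : ι → ℝ) bb = 0 := by
  ext i j; simp [vecMulVec_apply]

lemma vecMulVec_transpose' {ι ι' : Type} (a : ι → ℝ) (bb : ι' → ℝ) :
    (vecMulVec a bb)ᵀ = vecMulVec bb a := by
  ext i j; simp [vecMulVec_apply, mul_comm]

/-- Every entrywise-nonnegative matrix has a trivial PSD factorization. -/
lemma exists_trivial_fact {α β : Type} [Fintype α] [Fintype β] [DecidableEq β]
    (A : Matrix α β ℝ) (h : ∀ i j, 0 ≤ A i j) :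
    ∃ (B : α → Matrix (Fin (Fintype.card β)) (Fin (Fintype.card β)) ℝ)
      (C : β → Matrix (Fin (Fintype.card β)) (Fin (Fintype.card β)) ℝ),
    (∀ i, (B i).PosSemidef) ∧ (∀ j, (C j).PosSemidef) ∧
      ∀ i j, A i j = ((B i) * (C j)).trace := by
  classical
  set e := Fintype.equivFin β with he
  refine ⟨fun i => diagonal fun t => A i (e.symm t),
      fun j => diagonal fun t => if t = e j then 1 else 0, ?_, ?_, ?_⟩
  · exact fun i => posSemidef_diagonal_iff.mpr fun t => h i _
  · refine fun j => posSemidef_diagonal_iff.mpr fun t => ?_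
    split <;> norm_num
  · intro i j
    rw [diagonal_mul_diagonal, trace_diagonal]
    simp [mul_ite, Finset.sum_ite_eq']

/-- Rank factorization with a prescribed (over)size. -/
lemma exists_factor_of_rank_le {k r : ℕ} (P : Matrix (Fin k) (Fin k) ℝ) (h : P.rank ≤ r) :
    ∃ X Y : Matrix (Fin k) (Fin r) ℝ, P = X * Yᵀ := by
  classical
  set V := LinearMap.range P.mulVecLin with hV
  have hfr : Module.finrank ℝ V ≤ r := h
  set m := Module.finrank ℝ V with hm
  let bV : Module.Basis (Fin m) ℝ V := Module.finBasis ℝ V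
  let colV : Fin k → V := fun j => ⟨P *ᵥ Pi.single j 1, ⟨Pi.single j 1, rfl⟩⟩
  let X : Matrix (Fin k) (Fin r) ℝ := fun i t =>
    if ht : (t : ℕ) < m then ((bV ⟨t, ht⟩ : Fin k → ℝ) i) else 0
  let Y : Matrix (Fin k) (Fin r) ℝ := fun j t =>
    if ht : (t : ℕ) < m then bV.repr (colV j) ⟨t, ht⟩ else 0
  refine ⟨X, Y, ?_⟩
  ext i j
  have hcol : ((colV j : V) : Fin k → ℝ) i = P i j := by
    simp [colV, mulVec_single]
  rw [Matrix.mul_apply]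
  have hsum : ∀ t : Fin r, X i t * Yᵀ t j =
      if ht : (t : ℕ) < m then
        bV.repr (colV j) ⟨t, ht⟩ * ((bV ⟨t, ht⟩ : Fin k → ℝ) i) else 0 := by
    intro t
    by_cases ht : (t : ℕ) < m
    · rw [transpose_apply]; simp only [X, Y, transpose_apply, dif_pos ht]; ring
    · simp only [X, Y, transpose_apply, dif_neg ht, zero_mul]
  rw [Finset.sum_congr rfl fun t _ => hsum t]
  have hembed : Finset.univ.image (Fin.castLE hfr) ⊆ (Finset.univ : Finset (Fin r)) :=
    Finset.subset_univ _
  rw [← Finset.sum_subset hembed (fun t _ ht => ?_)]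
  · rw [Finset.sum_image (fun s _ s' _ hss => Fin.castLE_injective hfr hss)]
    have : ∀ s : Fin m,
        (if ht : ((Fin.castLE hfr s : Fin r) : ℕ) < m then
          bV.repr (colV j) ⟨(Fin.castLE hfr s : Fin r), ht⟩ *
            ((bV ⟨(Fin.castLE hfr s : Fin r), ht⟩ : Fin k → ℝ) i) else 0) =
        bV.repr (colV j) s * ((bV s : Fin k → ℝ) i) := by
      intro s
      rw [dif_pos (by simpa using s.isLt)]
      congr 1 <;> congr 1 <;> exact Fin.ext (by simp)
    rw [Finset.sum_congr rfl fun s _ => this s]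
    have hrepr := bV.sum_repr (colV j)
    have : ((∑ s : Fin m, bV.repr (colV j) s • bV s : V) : Fin k → ℝ) i
        = ((colV j : V) : Fin k → ℝ) i := by rw [hrepr]
    rw [hcol] at this
    rw [← this]
    push_cast [Submodule.coe_sum]
    rw [Finset.sum_apply]
    exact Finset.sum_congr rfl fun s _ => by simp [smul_eq_mul]
  · have htm : ¬ ((t : ℕ) < m) := by
      intro hlt
      exact ht (Finset.mem_image.mpr ⟨⟨t, hlt⟩, Finset.mem_univ _, Fin.ext (by simp)⟩)
    rw [dif_neg htm]

end PsdGadget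

open PsdGadget

theorem completion_from_gadget {n : ℕ} (S : Matrix (Fin n) (Fin n) ℝ)
    (b : Fin n → ℝ) (c : Fin n → ℝ) (N : ℕ) (hN : 0 < N) (r : ℕ)
    (hS : ∀ i j, 0 ≤ S i j) (hb : ∀ i, 0 ≤ b i) (hc : ∀ j, 0 ≤ c j)
    (hG : PsdRank (Matrix.fromBlocks S
        (Matrix.of fun i (j : Fin 3) => if j = 0 then b i else 0)
        (Matrix.of fun (i : Fin 3) j => if i = 0 then c j else 0)
        !![(N : ℝ), N, N; N, N, 0; N, 0, N]) ≤ r + 2) :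
    ∃ x : ℝ, 0 ≤ x ∧
      PsdRank (Matrix.fromBlocks S
        (Matrix.of fun i (_ : Fin 1) => b i)
        (Matrix.of fun (_ : Fin 1) j => c j)
        !![x]) ≤ r := by
  classical
  set G : Matrix (Fin n ⊕ Fin 3) (Fin n ⊕ Fin 3) ℝ := Matrix.fromBlocks S
      (Matrix.of fun i (j : Fin 3) => if j = 0 then b i else 0)
      (Matrix.of fun (i : Fin 3) j => if i = 0 then c j else 0)
      !![(N : ℝ), N, N; N, N, 0; N, 0, N] with hGdef
  have hNR : (0:ℝ) < N := by exact_mod_cast hN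
  -- nonnegativity of G
  have hGnn : ∀ i j, 0 ≤ G i j := by
    rintro (i | i) (j | j)
    · exact hS i j
    · simp only [hGdef, fromBlocks_apply₁₂, Matrix.of_apply]
      split
      · exact hb i
      · exact le_refl 0
    · simp only [hGdef, fromBlocks_apply₂₁, Matrix.of_apply]
      split
      · exact hc j
      · exact le_refl 0
    · simp only [hGdef, fromBlocks_apply₂₂]
      fin_cases i <;> fin_cases j <;> norm_num [hNR.le]
  -- the psd factorization set of G is nonempty, so its infimum is attained
  have hne : {k : ℕ | ∃ (B : (Fin n ⊕ Fin 3) → Matrix (Fin k) (Fin k) ℝ)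
      (C : (Fin n ⊕ Fin 3) → Matrix (Fin k) (Fin k) ℝ),
      (∀ i, (B i).PosSemidef) ∧ (∀ j, (C j).PosSemidef) ∧
        ∀ i j, G i j = ((B i) * (C j)).trace}.Nonempty := by
    obtain ⟨B, C, h1, h2, h3⟩ := exists_trivial_fact G hGnn
    exact ⟨_, B, C, h1, h2, h3⟩
  set k : ℕ := PsdRank G with hkdef
  have hkmem : ∃ (B : (Fin n ⊕ Fin 3) → Matrix (Fin k) (Fin k) ℝ)
      (C : (Fin n ⊕ Fin 3) → Matrix (Fin k) (Fin k) ℝ),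
      (∀ i, (B i).PosSemidef) ∧ (∀ j, (C j).PosSemidef) ∧
        ∀ i j, G i j = ((B i) * (C j)).trace := Nat.sInf_mem hne
  obtain ⟨B, C, hBpsd, hCpsd, hBC⟩ := hkmem
  -- entries of G in terms of traces
  have hent : ∀ (i j : Fin 3), ((B (Sum.inr i)) * (C (Sum.inr j))).trace
      = !![(N : ℝ), N, N; N, N, 0; N, 0, N] i j := by
    intro i j
    rw [← hBC (Sum.inr i) (Sum.inr j), hGdef, fromBlocks_apply₂₂]
  have h11 : ((B (Sum.inr 1)) * (C (Sum.inr 1))).trace = (N : ℝ) := by rw [hent]; norm_num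
  have h22 : ((B (Sum.inr 2)) * (C (Sum.inr 2))).trace = (N : ℝ) := by rw [hent]; rfl
  have h12 : ((B (Sum.inr 1)) * (C (Sum.inr 2))).trace = 0 := by rw [hent]; rfl
  have h21 : ((B (Sum.inr 2)) * (C (Sum.inr 1))).trace = 0 := by rw [hent]; rfl
  have hz12 : B (Sum.inr 1) * C (Sum.inr 2) = 0 :=
    psd_mul_eq_zero_of_trace (hBpsd _) (hCpsd _) h12
  have hz21 : B (Sum.inr 2) * C (Sum.inr 1) = 0 :=
    psd_mul_eq_zero_of_trace (hBpsd _) (hCpsd _) h21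
  have hrow : ∀ (i : Fin n) (j : Fin 3), ((B (Sum.inl i)) * (C (Sum.inr j))).trace
      = if j = 0 then b i else 0 := by
    intro i j
    rw [← hBC (Sum.inl i) (Sum.inr j), hGdef, fromBlocks_apply₁₂]
    simp
  have hcol : ∀ (i : Fin 3) (j : Fin n), ((B (Sum.inr i)) * (C (Sum.inl j))).trace
      = if i = 0 then c j else 0 := by
    intro i j
    rw [← hBC (Sum.inr i) (Sum.inl j), hGdef, fromBlocks_apply₂₁]
    simp
  have hzi1 : ∀ i : Fin n, B (Sum.inl i) * C (Sum.inr 1) = 0 := fun i =>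
    psd_mul_eq_zero_of_trace (hBpsd _) (hCpsd _) (by rw [hrow]; exact if_neg (by decide))
  have hzi2 : ∀ i : Fin n, B (Sum.inl i) * C (Sum.inr 2) = 0 := fun i =>
    psd_mul_eq_zero_of_trace (hBpsd _) (hCpsd _) (by rw [hrow]; exact if_neg (by decide))
  have hz1j : ∀ j : Fin n, B (Sum.inr 1) * C (Sum.inl j) = 0 := fun j =>
    psd_mul_eq_zero_of_trace (hBpsd _) (hCpsd _) (by rw [hcol]; exact if_neg (by decide))
  have hz2j : ∀ j : Fin n, B (Sum.inr 2) * C (Sum.inl j) = 0 := fun j =>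
    psd_mul_eq_zero_of_trace (hBpsd _) (hCpsd _) (by rw [hcol]; exact if_neg (by decide))
  -- choose the witness vectors
  have hprod1 : B (Sum.inr 1) * C (Sum.inr 1) ≠ 0 := by
    intro h0
    rw [h0, Matrix.trace_zero] at h11
    exact hNR.ne' h11.symm
  have hprod2 : B (Sum.inr 2) * C (Sum.inr 2) ≠ 0 := by
    intro h0
    rw [h0, Matrix.trace_zero] at h22
    exact hNR.ne' h22.symm
  have hex : ∀ M : Matrix (Fin k) (Fin k) ℝ, M ≠ 0 → ∃ z, M *ᵥ z ≠ 0 := by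
    intro M hM
    by_contra h0
    push_neg at h0
    apply hM
    ext i j
    have := congrFun (h0 (Pi.single j 1)) i
    rw [mulVec_single] at this
    simpa using this
  obtain ⟨z, hz⟩ := hex _ hprod1
  obtain ⟨z', hz'⟩ := hex _ hprod2
  set w : Fin k → ℝ := C (Sum.inr 1) *ᵥ z with hwdef
  set u : Fin k → ℝ := B (Sum.inr 1) *ᵥ w with hudef
  set w' : Fin k → ℝ := C (Sum.inr 2) *ᵥ z' with hw'def
  set u' : Fin k → ℝ := B (Sum.inr 2) *ᵥ w' with hu'def
  have hu_ne : u ≠ 0 := by rw [hudef, hwdef, mulVec_mulVec]; exact hz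
  have hu'_ne : u' ≠ 0 := by rw [hu'def, hw'def, mulVec_mulVec]; exact hz'
  have hB1symm : (B (Sum.inr 1))ᵀ = B (Sum.inr 1) := psd_symm (hBpsd _)
  have hB2symm : (B (Sum.inr 2))ᵀ = B (Sum.inr 2) := psd_symm (hBpsd _)
  set α : ℝ := w ⬝ᵥ u with hαdef
  set β : ℝ := w' ⬝ᵥ u' with hβdef
  have hα_pos : 0 < α := by
    have hnn : 0 ≤ α := by
      have := (hBpsd (Sum.inr 1)).dotProduct_mulVec_nonneg w
      simpa [hαdef, hudef] using this
    rcases hnn.lt_or_eq with h | h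
    · exact h
    · exfalso
      apply hu_ne
      rw [hudef]
      refine ((hBpsd (Sum.inr 1)).dotProduct_mulVec_zero_iff w).mp ?_
      simpa [hαdef, hudef] using h.symm
  have hβ_pos : 0 < β := by
    have hnn : 0 ≤ β := by
      have := (hBpsd (Sum.inr 2)).dotProduct_mulVec_nonneg w'
      simpa [hβdef, hu'def] using this
    rcases hnn.lt_or_eq with h | h
    · exact h
    · exfalso
      apply hu'_ne
      rw [hu'def]
      refine ((hBpsd (Sum.inr 2)).dotProduct_mulVec_zero_iff w').mp ?_
      simpa [hβdef, hu'def] using h.symm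
  -- cross orthogonality
  have hBw'_1 : B (Sum.inr 1) *ᵥ w' = 0 := by rw [hw'def, mulVec_mulVec, hz12, zero_mulVec]
  have hBw_2 : B (Sum.inr 2) *ᵥ w = 0 := by rw [hwdef, mulVec_mulVec, hz21, zero_mulVec]
  have huw' : u ⬝ᵥ w' = 0 := by rw [hudef, symm_dot hB1symm, hBw'_1, dotProduct_zero]
  have hu'w : u' ⬝ᵥ w = 0 := by rw [hu'def, symm_dot hB2symm, hBw_2, dotProduct_zero]
  -- kernel facts for the S-block rows and columns
  have hBw : ∀ i : Fin n, B (Sum.inl i) *ᵥ w = 0 := fun i => by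
    rw [hwdef, mulVec_mulVec, hzi1 i, zero_mulVec]
  have hBw' : ∀ i : Fin n, B (Sum.inl i) *ᵥ w' = 0 := fun i => by
    rw [hw'def, mulVec_mulVec, hzi2 i, zero_mulVec]
  have hCB1 : ∀ j : Fin n, C (Sum.inl j) * B (Sum.inr 1) = 0 := fun j => by
    have := congrArg Matrix.transpose (hz1j j)
    rwa [transpose_mul, hB1symm, psd_symm (hCpsd (Sum.inl j)), transpose_zero] at this
  have hCB2 : ∀ j : Fin n, C (Sum.inl j) * B (Sum.inr 2) = 0 := fun j => by
    have := congrArg Matrix.transpose (hz2j j)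
    rwa [transpose_mul, hB2symm, psd_symm (hCpsd (Sum.inl j)), transpose_zero] at this
  have hCu : ∀ j : Fin n, C (Sum.inl j) *ᵥ u = 0 := fun j => by
    rw [hudef, mulVec_mulVec, hCB1 j, zero_mulVec]
  have hCu' : ∀ j : Fin n, C (Sum.inl j) *ᵥ u' = 0 := fun j => by
    rw [hu'def, mulVec_mulVec, hCB2 j, zero_mulVec]
  -- the dual vectors
  set p : Fin k → ℝ := α⁻¹ • u with hpdef
  set q : Fin k → ℝ := β⁻¹ • u' with hqdef
  have hpw : p ⬝ᵥ w = 1 := by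
    rw [hpdef, smul_dotProduct, dotProduct_comm, ← hαdef, smul_eq_mul,
      inv_mul_cancel₀ hα_pos.ne']
  have hpw' : p ⬝ᵥ w' = 0 := by rw [hpdef, smul_dotProduct, huw', smul_zero]
  have hqw : q ⬝ᵥ w = 0 := by rw [hqdef, smul_dotProduct, hu'w, smul_zero]
  have hqw' : q ⬝ᵥ w' = 1 := by
    rw [hqdef, smul_dotProduct, dotProduct_comm, ← hβdef, smul_eq_mul,
      inv_mul_cancel₀ hβ_pos.ne']
  -- the oblique projection
  set P : Matrix (Fin k) (Fin k) ℝ := 1 - vecMulVec w p - vecMulVec w' q with hPdef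
  have hMP : ∀ M : Matrix (Fin k) (Fin k) ℝ, M *ᵥ w = 0 → M *ᵥ w' = 0 → M * P = M := by
    intro M h1 h2
    rw [hPdef, Matrix.mul_sub, Matrix.mul_sub, Matrix.mul_one, PsdGadget.mul_vecMulVec, PsdGadget.mul_vecMulVec,
      h1, h2, PsdGadget.zero_vecMulVec, PsdGadget.zero_vecMulVec, sub_zero, sub_zero]
  have hPt : Pᵀ = 1 - vecMulVec p w - vecMulVec q w' := by
    rw [hPdef, transpose_sub, transpose_sub, transpose_one, vecMulVec_transpose',
      vecMulVec_transpose']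
  have hMPt : ∀ M : Matrix (Fin k) (Fin k) ℝ, M *ᵥ u = 0 → M *ᵥ u' = 0 → M * Pᵀ = M := by
    intro M h1 h2
    have hp0 : M *ᵥ p = 0 := by rw [hpdef, mulVec_smul, h1, smul_zero]
    have hq0 : M *ᵥ q = 0 := by rw [hqdef, mulVec_smul, h2, smul_zero]
    rw [hPt, Matrix.mul_sub, Matrix.mul_sub, Matrix.mul_one, PsdGadget.mul_vecMulVec, PsdGadget.mul_vecMulVec,
      hp0, hq0, PsdGadget.zero_vecMulVec, PsdGadget.zero_vecMulVec, sub_zero, sub_zero]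
  have hPw : P *ᵥ w = 0 := by
    rw [hPdef, Matrix.sub_mulVec, Matrix.sub_mulVec, Matrix.one_mulVec, PsdGadget.vecMulVec_mulVec,
      PsdGadget.vecMulVec_mulVec, hpw, hqw, one_smul, zero_smul, sub_zero, sub_self]
  have hPw' : P *ᵥ w' = 0 := by
    rw [hPdef, Matrix.sub_mulVec, Matrix.sub_mulVec, Matrix.one_mulVec, PsdGadget.vecMulVec_mulVec,
      PsdGadget.vecMulVec_mulVec, hpw', hqw', one_smul, zero_smul, sub_zero, sub_self]
  have hPP : P * P = P := hMP P hPw hPw'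
  have hPtM : ∀ M : Matrix (Fin k) (Fin k) ℝ, Mᵀ = M → M *ᵥ w = 0 → M *ᵥ w' = 0 →
      Pᵀ * M = M := by
    intro M hMs h1 h2
    calc Pᵀ * M = (Mᵀ * P)ᵀ := by rw [transpose_mul, transpose_transpose]
      _ = (M * P)ᵀ := by rw [hMs]
      _ = Mᵀ := by rw [hMP M h1 h2]
      _ = M := hMs
  have hPM : ∀ M : Matrix (Fin k) (Fin k) ℝ, Mᵀ = M → M *ᵥ u = 0 → M *ᵥ u' = 0 →
      P * M = M := by
    intro M hMs h1 h2
    calc P * M = (Mᵀ * Pᵀ)ᵀ := by rw [transpose_mul, transpose_transpose, transpose_transpose]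
      _ = (M * Pᵀ)ᵀ := by rw [hMs]
      _ = Mᵀ := by rw [hMPt M h1 h2]
      _ = M := hMs
  -- rank bound
  have hind : LinearIndependent ℝ ![w, w'] := by
    rw [Fintype.linearIndependent_iff]
    intro g hg
    rw [Fin.sum_univ_two] at hg
    simp only [Matrix.cons_val_zero, Matrix.cons_val_one, Matrix.head_cons] at hg
    have h0 : g 0 = 0 := by
      have := congrArg (fun v => p ⬝ᵥ v) hg
      simpa [dotProduct_add, dotProduct_smul, hpw, hpw'] using this
    have h1 : g 1 = 0 := by
      have := congrArg (fun v => q ⬝ᵥ v) hg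
      simpa [dotProduct_add, dotProduct_smul, hqw, hqw'] using this
    intro i; fin_cases i
    · exact h0
    · exact h1
  have hrank : P.rank ≤ r := by
    have hsp : Submodule.span ℝ (Set.range ![w, w']) ≤ LinearMap.ker P.mulVecLin := by
      rw [Submodule.span_le]
      rintro x ⟨t, rfl⟩
      fin_cases t <;> simp [LinearMap.mem_ker, mulVecLin_apply, hPw, hPw']
    have h2 : 2 ≤ Module.finrank ℝ (LinearMap.ker P.mulVecLin) := by
      have hmono := Submodule.finrank_mono hsp
      rwa [finrank_span_eq_card hind, Fintype.card_fin] at hmono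
    have h3 := LinearMap.finrank_range_add_finrank_ker P.mulVecLin
    rw [Module.finrank_fin_fun] at h3
    have h4 : P.rank = Module.finrank ℝ (LinearMap.range P.mulVecLin) := rfl
    omega
  obtain ⟨X, Y, hXY⟩ := exists_factor_of_rank_le P hrank
  have hYX : Y * Xᵀ = Pᵀ := by rw [hXY, transpose_mul, transpose_transpose]
  -- the compressed factorization
  set Bn : (Fin n ⊕ Fin 1) → Matrix (Fin r) (Fin r) ℝ :=
    Sum.elim (fun i => Xᵀ * B (Sum.inl i) * X)
      (fun _ => Xᵀ * (Pᵀ * B (Sum.inr 0) * P) * X) with hBndef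
  set Cn : (Fin n ⊕ Fin 1) → Matrix (Fin r) (Fin r) ℝ :=
    Sum.elim (fun j => Yᵀ * C (Sum.inl j) * Y)
      (fun _ => Yᵀ * (P * C (Sum.inr 0) * Pᵀ) * Y) with hCndef
  have hBnpsd : ∀ i, (Bn i).PosSemidef := by
    rintro (i | i)
    · exact psd_conj (hBpsd _) X
    · exact psd_conj (psd_conj (hBpsd (Sum.inr 0)) P) X
  have hCnpsd : ∀ j, (Cn j).PosSemidef := by
    rintro (j | j)
    · exact psd_conj (hCpsd _) Y
    · have hinner := psd_conj (hCpsd (Sum.inr 0)) Pᵀ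
      rw [transpose_transpose] at hinner
      exact psd_conj hinner Y
  have htc : ∀ M Nn : Matrix (Fin k) (Fin k) ℝ,
      ((Xᵀ * M * X) * (Yᵀ * Nn * Y)).trace = ((M * P) * (Nn * Pᵀ)).trace := by
    intro M Nn
    calc ((Xᵀ * M * X) * (Yᵀ * Nn * Y)).trace
        = (Xᵀ * (M * (X * (Yᵀ * (Nn * Y))))).trace := by simp only [Matrix.mul_assoc]
      _ = ((M * (X * (Yᵀ * (Nn * Y)))) * Xᵀ).trace := by rw [Matrix.trace_mul_comm]
      _ = ((M * (X * Yᵀ)) * (Nn * (Y * Xᵀ))).trace := by simp only [Matrix.mul_assoc]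
      _ = ((M * P) * (Nn * Pᵀ)).trace := by rw [← hXY, hYX]
  have hPtPt : Pᵀ * Pᵀ = Pᵀ := by rw [← transpose_mul, hPP]
  refine ⟨(Bn (Sum.inr 0) * Cn (Sum.inr 0)).trace,
    psd_trace_mul_nonneg (hBnpsd _) (hCnpsd _), ?_⟩
  refine Nat.sInf_le ?_
  refine ⟨Bn, Cn, hBnpsd, hCnpsd, ?_⟩
  rintro (i | i) (j | j)
  · -- S block
    rw [fromBlocks_apply₁₁]
    show S i j = ((Xᵀ * B (Sum.inl i) * X) * (Yᵀ * C (Sum.inl j) * Y)).trace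
    rw [htc, hMP _ (hBw i) (hBw' i), hMPt _ (hCu j) (hCu' j), ← hBC, hGdef,
      fromBlocks_apply₁₁]
  · -- b column
    rw [fromBlocks_apply₁₂]
    show Matrix.of (fun i (_ : Fin 1) => b i) i j
        = ((Xᵀ * B (Sum.inl i) * X) * (Yᵀ * (P * C (Sum.inr 0) * Pᵀ) * Y)).trace
    rw [htc, hMP _ (hBw i) (hBw' i),
      Matrix.mul_assoc (P * C (Sum.inr 0)) Pᵀ Pᵀ, hPtPt,
      ← Matrix.mul_assoc (B (Sum.inl i)) (P * C (Sum.inr 0)) Pᵀ,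
      Matrix.trace_mul_cycle,
      hPtM _ (psd_symm (hBpsd _)) (hBw i) (hBw' i),
      ← Matrix.mul_assoc (B (Sum.inl i)) P (C (Sum.inr 0)),
      hMP _ (hBw i) (hBw' i), ← hBC, hGdef, fromBlocks_apply₁₂]
    simp
  · -- c row
    rw [fromBlocks_apply₂₁]
    show Matrix.of (fun (_ : Fin 1) j => c j) i j
        = ((Xᵀ * (Pᵀ * B (Sum.inr 0) * P) * X) * (Yᵀ * C (Sum.inl j) * Y)).trace
    rw [htc, hMPt _ (hCu j) (hCu' j),
      Matrix.mul_assoc (Pᵀ * B (Sum.inr 0)) P P, hPP,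
      Matrix.mul_assoc (Pᵀ * B (Sum.inr 0)) P (C (Sum.inl j)),
      hPM _ (psd_symm (hCpsd _)) (hCu j) (hCu' j),
      Matrix.mul_assoc Pᵀ (B (Sum.inr 0)) (C (Sum.inl j)),
      Matrix.trace_mul_comm Pᵀ,
      Matrix.mul_assoc (B (Sum.inr 0)) (C (Sum.inl j)) Pᵀ,
      hMPt _ (hCu j) (hCu' j), ← hBC, hGdef, fromBlocks_apply₂₁]
    simp
  · -- the free corner
    rw [fromBlocks_apply₂₂]
    fin_cases i <;> fin_cases j
    simp
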